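/- Suppose M is a real symmetric orthogonal matrix with graph G. If u and w are nonadjacent vertices of G with exactly one common neighbor t, then a contradiction arises: M_{ut} M_{tw} = 0 with both factors nonzero. Consequently, if G contains a unique shortest path of length 2 between some pair of nonadjacent vertices, then q(G) > 2. -/
import Mathlib


open Matrix

/-- If a graph `G` contains a unique shortest path of length `2`
between some pair of nonadjacent vertices (i.e. nonadjacent `u ≠ w` with exactly one
common neighbor), then there is no real symmetric orthogonal matrix whose
off-diagonal zero pattern matches the adjacency of `G`; that is, `q(G) > 2`. -/
theorem stmt_10 {V : Type*} [Fintype V] [DecidableEq V] (G : SimpleGraph V)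
    (u w : V) (hne : u ≠ w) (hnadj : ¬ G.Adj u w)
    (huniq : ∃! t : V, G.Adj u t ∧ G.Adj t w) :
    ¬ ∃ M : Matrix V V ℝ, M.IsSymm ∧ M * M = 1 ∧
      (∀ x y : V, x ≠ y → (M x y ≠ 0 ↔ G.Adj x y)) := by
  rintro ⟨M, hsym, hMM, hpat⟩
  obtain ⟨t, ⟨hut, htw⟩, ht⟩ := huniq
  have hMuw : M u w = 0 := by
    by_contra h
    exact hnadj ((hpat u w hne).mp h)
  have h0 : (M * M) u w = 0 := by
    rw [hMM, Matrix.one_apply_ne hne]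
  rw [Matrix.mul_apply] at h0
  have hsum : ∑ k, M u k * M k w = M u t * M t w := by
    apply Finset.sum_eq_single
    · intro k _ hkt
      by_contra h
      have h1 : M u k ≠ 0 := fun hz => h (by rw [hz, zero_mul])
      have h2 : M k w ≠ 0 := fun hz => h (by rw [hz, mul_zero])
      rcases eq_or_ne u k with rfl | huk
      · exact h2 hMuw
      rcases eq_or_ne k w with rfl | hkw
      · exact h1 hMuw
      exact hkt (ht k ⟨(hpat u k huk).mp h1, (hpat k w hkw).mp h2⟩)
    · intro h; exact absurd (Finset.mem_univ t) h
  rw [hsum] at h0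
  have h1 : M u t ≠ 0 := (hpat u t hut.ne).mpr hut
  have h2 : M t w ≠ 0 := (hpat t w htw.ne).mpr htw
  exact mul_ne_zero h1 h2 h0
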